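/- arXiv:2106.14141 — 4 statements merged into one kernel-verified Lean document; each statement's English description precedes it below -/
import Mathlib

section
/- If C is a cap in (ZMod 3)^4 of size 20 consisting of 10 pairs {d_i, d_i'} with a + d_i + d_i' = 0 for a common point a ∉ C, then a ∉ C and for every point p ∉ C ∪ {a} the number of unordered pairs {x,y} ⊆ C with p + x + y = 0 is at least 1. -/
abbrev V4 := Fin 4 → ZMod 3

def IsCap (C : Set V4) : Prop :=
  ∀ a ∈ C, ∀ b ∈ C, ∀ c ∈ C, a ≠ b → a ≠ c → b ≠ c → a + b + c ≠ 0

/-- the constant vector with value `γ` -/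
def ccV (γ : ZMod 3) : V4 := fun _ => γ

lemma three_eq_zero : (3 : V4) = 0 := by decide

lemma cap20_aux (D : Finset V4) (hsym : ∀ x ∈ D, -x ∈ D)
    (hcapD : ∀ x ∈ D, ∀ y ∈ D, ∀ z ∈ D, x ≠ y → x ≠ z → y ≠ z → x + y + z ≠ 0)
    (hcard : D.card = 20) (h0 : (0 : V4) ∉ D) (q : V4) (hq0 : q ≠ 0) (hqD : q ∉ D)
    (hno : ∀ x ∈ D, ∀ y ∈ D, x ≠ y → x + y ≠ -q) : False := by
  classical
  have h3V : (3 : V4) = 0 := three_eq_zero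
  have hc0 : ccV 0 * q = 0 := by rw [show ccV 0 = (0 : V4) from rfl, zero_mul]
  have hc1 : ccV 1 * q = q := by rw [show ccV 1 = (1 : V4) from rfl, one_mul]
  have hc2 : ccV 2 * q = -q := by
    rw [show ccV 2 = (2 : V4) from rfl]
    linear_combination q * h3V
  have hlineD : ∀ γ : ZMod 3, ccV γ * q ∉ D := by
    intro γ hmem
    rcases (by decide : ∀ g : ZMod 3, g = 0 ∨ g = 1 ∨ g = 2) γ with h | h | h <;>
      subst h
    · rw [hc0] at hmem; exact h0 hmem
    · rw [hc1] at hmem; exact hqD hmem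
    · rw [hc2] at hmem; exact hqD (by simpa using hsym _ hmem)
  set T : Finset V4 := D ∪ D.image (· + q) ∪ D.image (· - q) with hT
  have hmemT : ∀ w, w ∈ T ↔ w ∈ D ∨ (∃ x ∈ D, x + q = w) ∨ (∃ x ∈ D, x - q = w) := by
    intro w
    constructor
    · intro hw
      rcases Finset.mem_union.1 hw with hw' | hw'
      · rcases Finset.mem_union.1 hw' with h | h
        · exact Or.inl h
        · obtain ⟨x, hx, hxe⟩ := Finset.mem_image.1 h
          exact Or.inr (Or.inl ⟨x, hx, hxe⟩)
      · obtain ⟨x, hx, hxe⟩ := Finset.mem_image.1 hw'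
        exact Or.inr (Or.inr ⟨x, hx, hxe⟩)
    · rintro (h | ⟨x, hx, hxe⟩ | ⟨x, hx, hxe⟩)
      · exact Finset.mem_union.2 (Or.inl (Finset.mem_union.2 (Or.inl h)))
      · exact Finset.mem_union.2 (Or.inl (Finset.mem_union.2 (Or.inr
          (Finset.mem_image.2 ⟨x, hx, hxe⟩))))
      · exact Finset.mem_union.2 (Or.inr (Finset.mem_image.2 ⟨x, hx, hxe⟩))
  have hlift : ∀ w ∈ T, ∃ γ : ZMod 3, w + ccV γ * q ∈ D := by
    intro w hw
    rcases (hmemT w).1 hw with h | ⟨x, hx, hxw⟩ | ⟨x, hx, hxw⟩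
    · exact ⟨0, by rw [hc0, add_zero]; exact h⟩
    · refine ⟨2, ?_⟩
      rw [hc2, ← hxw]
      simpa using hx
    · refine ⟨1, ?_⟩
      rw [hc1, ← hxw]
      simpa using hx
  have hlineT : ∀ γ : ZMod 3, ccV γ * q ∉ T := by
    intro γ hmem
    obtain ⟨δ, hδ⟩ := hlift _ hmem
    have he : ccV γ * q + ccV δ * q = ccV (γ + δ) * q := by
      rw [show ccV (γ + δ) = ccV γ + ccV δ from rfl, add_mul]
    rw [he] at hδ
    exact hlineD _ hδ
  have hnl : ∀ z ∈ T, ∀ e : V4, (∃ γ : ZMod 3, e = ccV γ) → e * q ≠ z := by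
    rintro z hz e ⟨γ, rfl⟩ h
    exact hlineT γ (h ▸ hz)
  have hDsub : D ⊆ T := fun x hx => (hmemT x).2 (Or.inl hx)
  have hcard1 : (D.image (· + q)).card = 20 := by
    rw [Finset.card_image_of_injective _ (add_left_injective q), hcard]
  have hcard2 : (D.image (· - q)).card = 20 := by
    have hinj : Function.Injective (· - q) := fun x y h => by
      have := congrArg (· + q) h
      simpa using this
    rw [Finset.card_image_of_injective _ hinj, hcard]
  have hd1 : Disjoint D (D.image (· + q)) := by
    rw [Finset.disjoint_left]
    intro w hwD hwI
    obtain ⟨y, hy, hyw⟩ := Finset.mem_image.1 hwI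
    have hne : -w ≠ y := by
      intro h
      apply hqD
      have hqy : q = y := by linear_combination hyw - h - y * h3V
      rw [hqy]; exact hy
    exact hno (-w) (hsym _ hwD) y hy hne (by linear_combination hyw)
  have hd2 : Disjoint D (D.image (· - q)) := by
    rw [Finset.disjoint_left]
    intro w hwD hwI
    obtain ⟨y, hy, hyw⟩ := Finset.mem_image.1 hwI
    have hne : w ≠ -y := by
      intro h
      apply hqD
      have hqy : q = -y := by linear_combination -hyw - h + y * h3V
      rw [hqy]; exact hsym y hy
    exact hno w hwD (-y) (hsym y hy) hne (by linear_combination -hyw)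
  have hd3 : Disjoint (D.image (· + q)) (D.image (· - q)) := by
    rw [Finset.disjoint_left]
    intro w hwI1 hwI2
    obtain ⟨x, hx, hxw⟩ := Finset.mem_image.1 hwI1
    obtain ⟨y, hy, hyw⟩ := Finset.mem_image.1 hwI2
    have hne : y ≠ -x := by
      intro h
      apply hqD
      have hqy : q = y := by linear_combination -hxw + hyw + h + (q - y) * h3V
      rw [hqy]; exact hy
    exact hno y hy (-x) (hsym x hx) hne (by linear_combination -hxw + hyw + q * h3V)
  have hcardT : T.card = 60 := by
    have hdisj : Disjoint (D ∪ D.image (· + q)) (D.image (· - q)) :=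
      Finset.disjoint_union_left.2 ⟨hd2, hd3⟩
    rw [hT, Finset.card_union_of_disjoint hdisj, Finset.card_union_of_disjoint hd1,
      hcard, hcard1, hcard2]
  have hcardV : Fintype.card V4 = 81 := by
    simp [Fintype.card_fun]
  obtain ⟨u1, hu1D⟩ : ∃ u1, u1 ∈ D := by
    have : D.Nonempty := Finset.card_pos.1 (by rw [hcard]; norm_num)
    exact this
  have hu1T : u1 ∈ T := hDsub hu1D
  have hGood : ∃ u2, u2 ∈ T ∧ u1 + u2 ∈ T ∧ u1 - u2 ∈ T := by
    by_contra hcon2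
    push_neg at hcon2
    have hsub : (Finset.univ : Finset V4) ⊆
        Tᶜ ∪ Tᶜ.image (fun x => x - u1) ∪ Tᶜ.image (fun x => u1 - x) := by
      intro u _
      by_cases h1 : u ∈ T
      · by_cases h2 : u1 + u ∈ T
        · have h3 : u1 - u ∉ T := hcon2 u h1 h2
          exact Finset.mem_union.2 (Or.inr (Finset.mem_image.2
            ⟨u1 - u, Finset.mem_compl.2 h3, by ring⟩))
        · exact Finset.mem_union.2 (Or.inl (Finset.mem_union.2 (Or.inr
            (Finset.mem_image.2 ⟨u1 + u, Finset.mem_compl.2 h2, by ring⟩))))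
      · exact Finset.mem_union.2 (Or.inl (Finset.mem_union.2 (Or.inl
          (Finset.mem_compl.2 h1))))
    have hle := Finset.card_le_card hsub
    rw [Finset.card_univ, hcardV] at hle
    have hcc : (Tᶜ : Finset V4).card = 21 := by
      rw [Finset.card_compl, hcardT, hcardV]
    have h1 := Finset.card_union_le (Tᶜ ∪ Tᶜ.image (fun x => x - u1))
      (Tᶜ.image (fun x => u1 - x))
    have h2 := Finset.card_union_le (Tᶜ : Finset V4) (Tᶜ.image (fun x => x - u1))
    have h4 := Finset.card_image_le (s := (Tᶜ : Finset V4)) (f := fun x => x - u1)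
    have h5 := Finset.card_image_le (s := (Tᶜ : Finset V4)) (f := fun x => u1 - x)
    omega
  obtain ⟨u2, hu2T, hvT, hwT⟩ := hGood
  obtain ⟨A, hA⟩ := hlift u2 hu2T
  obtain ⟨B, hB⟩ := hlift (u1 + u2) hvT
  obtain ⟨E, hE⟩ := hlift (u1 - u2) hwT
  rcases (by decide : ∀ x y z : ZMod 3,
      x - y = 0 ∨ x + y - z = 0 ∨ x + z = 0 ∨ y + z = 0) A B E with hk | hk | hk | hk
  · -- case A - B = 0 : triple (Xa, u1, -Xb)
    have hkV : ccV A - ccV B = (0 : V4) := funext fun _ => hk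
    refine hcapD (u2 + ccV A * q) hA u1 hu1D (-(u1 + u2 + ccV B * q)) (hsym _ hB)
      ?_ ?_ ?_ ?_
    · intro h
      exact hnl (u1 - u2) hwT (ccV A) ⟨A, rfl⟩ (by linear_combination h)
    · intro h
      exact hnl (u1 - u2) hwT (-(ccV A + ccV B)) ⟨-(A + B), rfl⟩
        (by linear_combination -h + u2 * h3V)
    · intro h
      exact hnl (u1 - u2) hwT (ccV B) ⟨B, rfl⟩ (by linear_combination h - u1 * h3V)
    · linear_combination q * hkV
  · -- case A + B - E = 0 : triple (Xa, Xb, -Xe)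
    have hkV : ccV A + ccV B - ccV E = (0 : V4) := funext fun _ => hk
    refine hcapD (u2 + ccV A * q) hA (u1 + u2 + ccV B * q) hB
      (-(u1 - u2 + ccV E * q)) (hsym _ hE) ?_ ?_ ?_ ?_
    · intro h
      exact hnl u1 hu1T (ccV A - ccV B) ⟨A - B, rfl⟩ (by linear_combination h)
    · intro h
      exact hnl u1 hu1T (-(ccV A + ccV E)) ⟨-(A + E), rfl⟩ (by linear_combination -h)
    · intro h
      exact hnl u1 hu1T (ccV B + ccV E) ⟨B + E, rfl⟩
        (by linear_combination h - u1 * h3V)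
    · linear_combination q * hkV + u2 * h3V
  · -- case A + E = 0 : triple (Xa, Xe, -u1)
    have hkV : ccV A + ccV E = (0 : V4) := funext fun _ => hk
    refine hcapD (u2 + ccV A * q) hA (u1 - u2 + ccV E * q) hE (-u1) (hsym _ hu1D)
      ?_ ?_ ?_ ?_
    · intro h
      exact hnl (u1 + u2) hvT (ccV A - ccV E) ⟨A - E, rfl⟩
        (by linear_combination h - u2 * h3V)
    · intro h
      exact hnl (u1 + u2) hvT (-(ccV A)) ⟨-A, rfl⟩ (by linear_combination -h)
    · intro h
      exact hnl (u1 + u2) hvT (ccV E) ⟨E, rfl⟩ (by linear_combination h - u1 * h3V)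
    · linear_combination q * hkV
  · -- case B + E = 0 : triple (u1, Xb, Xe)
    have hkV : ccV B + ccV E = (0 : V4) := funext fun _ => hk
    refine hcapD u1 hu1D (u1 + u2 + ccV B * q) hB (u1 - u2 + ccV E * q) hE
      ?_ ?_ ?_ ?_
    · intro h
      exact hnl u2 hu2T (-(ccV B)) ⟨-B, rfl⟩ (by linear_combination h)
    · intro h
      exact hnl u2 hu2T (ccV E) ⟨E, rfl⟩ (by linear_combination -h)
    · intro h
      exact hnl u2 hu2T (ccV B - ccV E) ⟨B - E, rfl⟩
        (by linear_combination h - u2 * h3V)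
    · linear_combination q * hkV + u1 * h3V

/-- If `C` is a 20-point cap made of 10 pairs each completing a line with a common
anchor `a ∉ C`, then `a ∉ C` and every point outside `C ∪ {a}` completes at least
one line with a pair of points of `C`. -/
theorem every_point_completes_a_line (C : Finset V4) (a : V4) (d d' : Fin 10 → V4)
    (hpair : ∀ i, a + d i + d' i = 0)
    (hC : C = Finset.univ.image d ∪ Finset.univ.image d')
    (hcard : C.card = 20) (hcap : IsCap (↑C : Set V4)) (ha : a ∉ C) :
    a ∉ C ∧ ∀ p : V4, p ∉ C → p ≠ a → ∃ x ∈ C, ∃ y ∈ C, x ≠ y ∧ p + x + y = 0 := by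
  have h3V : (3 : V4) = 0 := three_eq_zero
  have hpart : ∀ c ∈ C, -a - c ∈ C := by
    intro c hc
    rw [hC] at hc ⊢
    rcases Finset.mem_union.1 hc with h | h <;> obtain ⟨i, -, rfl⟩ := Finset.mem_image.1 h
    · exact Finset.mem_union.2 (Or.inr (Finset.mem_image.2
        ⟨i, Finset.mem_univ i, by linear_combination hpair i⟩))
    · exact Finset.mem_union.2 (Or.inl (Finset.mem_image.2
        ⟨i, Finset.mem_univ i, by linear_combination hpair i⟩))
  refine ⟨ha, fun p hp hpa => ?_⟩
  by_contra hcon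
  push_neg at hcon
  refine cap20_aux (C.image (fun x => x - a)) ?_ ?_ ?_ ?_ (p - a) ?_ ?_ ?_
  · -- symmetric
    intro x hx
    obtain ⟨c, hc, rfl⟩ := Finset.mem_image.1 hx
    exact Finset.mem_image.2 ⟨-a - c, hpart c hc, by linear_combination -a * h3V⟩
  · -- cap
    intro x hx y hy z hz hxy hxz hyz hsum
    obtain ⟨c1, hc1, rfl⟩ := Finset.mem_image.1 hx
    obtain ⟨c2, hc2, rfl⟩ := Finset.mem_image.1 hy
    obtain ⟨c3, hc3, rfl⟩ := Finset.mem_image.1 hz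
    refine hcap c1 (Finset.mem_coe.2 hc1) c2 (Finset.mem_coe.2 hc2) c3
      (Finset.mem_coe.2 hc3) (fun h => hxy (by rw [h])) (fun h => hxz (by rw [h]))
      (fun h => hyz (by rw [h])) ?_
    linear_combination hsum + a * h3V
  · -- card
    have hinj : Function.Injective (fun x : V4 => x - a) := fun x y h => by
      linear_combination h
    rw [Finset.card_image_of_injective _ hinj, hcard]
  · -- 0 ∉
    intro h
    obtain ⟨c, hc, hca⟩ := Finset.mem_image.1 h
    have hce : c = a := by linear_combination hca
    exact ha (hce ▸ hc)
  · -- q ≠ 0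
    exact sub_ne_zero_of_ne hpa
  · -- q ∉ D
    intro h
    obtain ⟨c, hc, hcq⟩ := Finset.mem_image.1 h
    have hce : c = p := by linear_combination hcq
    exact hp (hce ▸ hc)
  · -- no pair
    intro x hx y hy hxy hsum
    obtain ⟨c1, hc1, rfl⟩ := Finset.mem_image.1 hx
    obtain ⟨c2, hc2, rfl⟩ := Finset.mem_image.1 hy
    exact hcon c1 hc1 c2 hc2 (fun h => hxy (by rw [h]))
      (by linear_combination hsum + a * h3V)
end

section
/- Let a ∈ (ZMod 3)^4 and let D be a set of 10 points forming 5 pairs {d_i, d_i'} with a + d_i + d_i' = 0, such that D is a cap. Then D is a demicap (no four of the five lines lie in a common affine hyperplane through a) if and only if for every point b ∉ D ∪ {a}, there is at most one unordered pair {x,y} ⊆ D with b + x + y = 0. -/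
def ind (i m : Fin 5) : ZMod 3 := if m = i then 1 else 0

def sg (b : Bool) : ZMod 3 := if b then 1 else -1

lemma sg_ne_zero (b : Bool) : sg b ≠ 0 := by cases b <;> decide

lemma zmod3_ne_zero {x : ZMod 3} (h : x ≠ 0) : ∃ b, x = sg b := by
  revert x h; decide

lemma sum_ind_smul (σ : ZMod 3) (i : Fin 5) (e : Fin 5 → V4) :
    ∑ m, (σ * ind i m) • e m = σ • e i := by
  rw [Finset.sum_eq_single i]
  · simp [ind]
  · intro m _ hm; simp [ind, hm]
  · simp

lemma D4 : ∀ (i j k l : Fin 5) (b1 b2 b3 b4 : Bool),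
    i ≠ j → k ≠ l →
    (∀ m, sg b1 * ind i m + sg b2 * ind j m - sg b3 * ind k m - sg b4 * ind l m = 0) →
    ((i = k ∧ b1 = b3 ∧ j = l ∧ b2 = b4) ∨ (i = l ∧ b1 = b4 ∧ j = k ∧ b2 = b3)) := by
  decide

lemma zmod3_add_eq_zero : ∀ σ τ : ZMod 3, σ ≠ 0 → τ ≠ 0 → σ ≠ τ → σ + τ = 0 := by decide

lemma pair_rel {v w : V4} {σ τ : ZMod 3} (hσ : σ ≠ 0) (hτ : τ ≠ 0)
    (h : σ • v + τ • w = 0) : v = w ∨ v = -w := by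
  obtain ⟨b1, rfl⟩ := zmod3_ne_zero hσ
  obtain ⟨b2, rfl⟩ := zmod3_ne_zero hτ
  cases b1 <;> cases b2 <;> simp [sg] at h
  · exact Or.inr (by linear_combination -h)
  · exact Or.inl (by linear_combination -h)
  · exact Or.inl (by linear_combination h)
  · exact Or.inr (by linear_combination h)

section
variable (e : Fin 5 → V4)
    (h0 : ∀ i, e i ≠ 0)
    (h2 : ∀ i j, i ≠ j → ∀ σ τ : ZMod 3, σ ≠ 0 → τ ≠ 0 → σ • e i + τ • e j ≠ 0)
    (h3 : ∀ i j k, i ≠ j → i ≠ k → j ≠ k → ∀ σ τ υ : ZMod 3, σ ≠ 0 → τ ≠ 0 → υ ≠ 0 →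
      σ • e i + τ • e j + υ • e k ≠ 0)

include h0 h2 h3 in
/-- A three-term relation with possibly coincident third index is impossible,
as long as the first two indices differ. -/
lemma L3 : ∀ i j k, i ≠ j → ∀ σ τ υ : ZMod 3, σ ≠ 0 → τ ≠ 0 → υ ≠ 0 →
    σ • e i + τ • e j + υ • e k ≠ 0 := by
  intro i j k hij σ τ υ hσ hτ hυ h
  by_cases hki : k = i
  · subst hki
    have hrw : (σ + υ) • e k + τ • e j = 0 := by
      rw [add_smul]; linear_combination h
    by_cases hsv : σ + υ = 0
    · rw [hsv, zero_smul, zero_add] at hrw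
      exact h0 j (by simpa [smul_eq_zero, hτ] using hrw)
    · exact h2 k j hij _ _ hsv hτ hrw
  · by_cases hkj : k = j
    · subst hkj
      have hrw : σ • e i + (τ + υ) • e k = 0 := by
        rw [add_smul]; linear_combination h
      by_cases hsv : τ + υ = 0
      · rw [hsv, zero_smul, add_zero] at hrw
        exact h0 i (by simpa [smul_eq_zero, hσ] using hrw)
      · exact h2 i k hij _ _ hσ hsv hrw
    · exact h3 i j k hij (Ne.symm hki) (Ne.symm hkj) _ _ _ hσ hτ hυ h

include h0 h2 h3 in
/-- Any relation with support of size ≤ 3 is trivial. -/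
lemma lemK (c : Fin 5 → ZMod 3) (hrel : ∑ m, c m • e m = 0)
    (hcard : (Finset.univ.filter (fun m => c m ≠ 0)).card ≤ 3) : c = 0 := by
  set t := Finset.univ.filter (fun m => c m ≠ 0) with ht
  have hsum : ∑ m ∈ t, c m • e m = 0 := by
    rw [ht, Finset.sum_filter_of_ne (fun m _ hm => by
      intro hc; exact hm (by rw [hc, zero_smul]))]
    exact hrel
  by_contra hc0
  have hne : t.Nonempty := by
    obtain ⟨m, hm⟩ := Function.ne_iff.mp hc0
    exact ⟨m, by simpa [ht] using hm⟩
  have hmem : ∀ m ∈ t, c m ≠ 0 := fun m hm => (Finset.mem_filter.mp hm).2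
  interval_cases hcd : t.card
  · exact Finset.card_ne_zero_of_mem hne.choose_spec (by omega)
  · obtain ⟨m, hm⟩ := Finset.card_eq_one.mp hcd
    rw [hm, Finset.sum_singleton] at hsum
    exact h0 m (by simpa [smul_eq_zero, hmem m (hm ▸ Finset.mem_singleton_self m)] using hsum)
  · obtain ⟨m, n, hmn, hm⟩ := Finset.card_eq_two.mp hcd
    rw [hm, Finset.sum_pair hmn] at hsum
    exact h2 m n hmn _ _ (hmem m (by simp [hm])) (hmem n (by simp [hm])) hsum
  · obtain ⟨m, n, p, hmn, hmp, hnp, hm⟩ := Finset.card_eq_three.mp hcd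
    rw [hm] at hsum
    rw [Finset.sum_insert (by simp [hmn, hmp]), Finset.sum_pair hnp] at hsum
    exact h3 m n p hmn hmp hnp _ _ _ (hmem m (by simp [hm])) (hmem n (by simp [hm]))
      (hmem p (by simp [hm])) (by linear_combination hsum)

end

lemma finrank_V4 : Module.finrank (ZMod 3) V4 = 4 := Module.finrank_fin_fun (ZMod 3)

lemma ext_step (W : Submodule (ZMod 3) V4) (h : Module.finrank (ZMod 3) W < 3) :
    ∃ W', W ≤ W' ∧ Module.finrank (ZMod 3) W' = Module.finrank (ZMod 3) W + 1 := by
  obtain ⟨m, hm⟩ := W.exists_of_finrank_lt (by rw [finrank_V4]; omega)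
  refine ⟨W ⊔ Submodule.span (ZMod 3) {m}, le_sup_left, ?_⟩
  have hm0 : m ≠ 0 := by intro h0; exact hm 1 one_ne_zero (by simp [h0])
  have hdis : W ⊓ Submodule.span (ZMod 3) {m} = ⊥ := by
    rw [Submodule.eq_bot_iff]
    intro x ⟨hxW, hxS⟩
    obtain ⟨r, rfl⟩ := Submodule.mem_span_singleton.mp hxS
    by_contra hne
    have hr : r ≠ 0 := by rintro rfl; simp at hne
    exact hm r hr hxW
  have h2 := Submodule.finrank_sup_add_finrank_inf_eq W (Submodule.span (ZMod 3) {m})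
  rw [hdis, finrank_bot, finrank_span_singleton hm0] at h2
  omega

lemma ext_to_three (W : Submodule (ZMod 3) V4) (h : Module.finrank (ZMod 3) W ≤ 3) :
    ∃ W', W ≤ W' ∧ Module.finrank (ZMod 3) W' = 3 := by
  obtain ⟨n, hn⟩ : ∃ n, 3 - Module.finrank (ZMod 3) W = n := ⟨_, rfl⟩
  induction n generalizing W with
  | zero => exact ⟨W, le_rfl, by omega⟩
  | succ k ih =>
    obtain ⟨W1, hle, hr⟩ := ext_step W (by omega)
    obtain ⟨W', hle', hr'⟩ := ih W1 (by omega) (by omega)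
    exact ⟨W', hle.trans hle', hr'⟩

/-- From a linear relation with support of size 4 we get a 3-dimensional
subspace containing the supported vectors. -/
lemma exists_W (e : Fin 5 → V4) (c : Fin 5 → ZMod 3) (hrel : ∑ m, c m • e m = 0)
    (hcd : (Finset.univ.filter (fun m => c m ≠ 0)).card = 4) :
    ∃ W : Submodule (ZMod 3) V4, Module.finrank (ZMod 3) W = 3 ∧
      ∀ m ∈ Finset.univ.filter (fun m => c m ≠ 0), e m ∈ W := by
  set t := Finset.univ.filter (fun m => c m ≠ 0) with ht
  have hmem : ∀ m ∈ t, c m ≠ 0 := fun m hm => (Finset.mem_filter.mp hm).2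
  have hsum : ∑ m ∈ t, c m • e m = 0 := by
    rw [ht, Finset.sum_filter_of_ne (fun m _ hm => by
      intro hc; exact hm (by rw [hc, zero_smul]))]
    exact hrel
  obtain ⟨m0, hm0⟩ : t.Nonempty := Finset.card_pos.mp (by omega)
  set T : Finset V4 := (t.erase m0).image e with hT
  have hfr : Module.finrank (ZMod 3) (Submodule.span (ZMod 3) (T : Set V4)) ≤ 3 := by
    refine le_trans (finrank_span_finset_le_card _) ?_
    calc T.card ≤ (t.erase m0).card := Finset.card_image_le
    _ ≤ 3 := by rw [Finset.card_erase_of_mem hm0, hcd]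
  obtain ⟨W, hWle, hW3⟩ := ext_to_three _ hfr
  refine ⟨W, hW3, ?_⟩
  have hrest : ∀ m ∈ t.erase m0, e m ∈ W := fun m hm =>
    hWle (Submodule.subset_span (Finset.mem_coe.mpr (Finset.mem_image_of_mem e hm)))
  intro m hm
  by_cases hmm : m = m0
  · subst hmm
    -- c m • e m = -∑ rest
    have hsplit : c m • e m + ∑ n ∈ t.erase m, c n • e n = 0 :=
      (Finset.add_sum_erase t (fun n => c n • e n) hm).trans hsum
    have hcm : c m ≠ 0 := hmem m hm
    have h2 : ∑ n ∈ t.erase m, c n • e n = -(c m • e m) := by linear_combination hsplit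
    have : e m = (- (c m)⁻¹) • ∑ n ∈ t.erase m, c n • e n := by
      rw [h2, smul_neg, neg_smul, neg_neg, smul_smul, inv_mul_cancel₀ hcm, one_smul]
    rw [this]
    exact Submodule.smul_mem _ _ (Submodule.sum_mem _ (fun n hn =>
      Submodule.smul_mem _ _ (hrest n hn)))
  · exact hrest m (Finset.mem_erase.mpr ⟨hmm, hm⟩)


/-- A cap consisting of five `a`-lines is a demicap (no four of the five lines
through `a` lie in a common affine hyperplane) iff every point `b ∉ D ∪ {a}`
completes at most one line with a pair of points of `D`. -/
theorem demicap_iff_at_most_one_line (a : V4) (d d' : Fin 5 → V4)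
    (hpair : ∀ i, a + d i + d' i = 0)
    (D : Set V4) (hD : D = Set.range d ∪ Set.range d')
    (hcard : D.ncard = 10) (hcap : IsCap D) :
    (¬ ∃ s : Finset (Fin 5), s.card = 4 ∧
        ∃ W : Submodule (ZMod 3) V4, Module.finrank (ZMod 3) W = 3 ∧
          ∀ i ∈ s, d i - a ∈ W) ↔
      ∀ b : V4, b ∉ D → b ≠ a →
        ∀ x ∈ D, ∀ y ∈ D, ∀ x' ∈ D, ∀ y' ∈ D,
          x ≠ y → x' ≠ y' → b + x + y = 0 → b + x' + y' = 0 →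
            ({x, y} : Set V4) = {x', y'} := by
  classical
  -- the ten points are distinct
  have hfinj : Function.Injective (Sum.elim d d') := by
    have hDf : D = Set.range (Sum.elim d d') := by rw [hD, Set.Sum.elim_range]
    have h1 : (Finset.univ.image (Sum.elim d d')).card = 10 := by
      have h2 : D.ncard = (Finset.univ.image (Sum.elim d d')).card := by
        have : Set.range (Sum.elim d d') = ↑(Finset.univ.image (Sum.elim d d')) := by
          rw [Finset.coe_image, Finset.coe_univ, Set.image_univ]
        rw [hDf, this, Set.ncard_coe_finset]
      omega
    have h3 := Finset.card_image_iff.mp (by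
      rw [h1, Finset.card_univ]; rfl)
    intro u v huv
    exact h3 (Finset.mem_coe.mpr (Finset.mem_univ u)) (Finset.mem_coe.mpr (Finset.mem_univ v)) huv
  have h3v : ∀ v : V4, v + v + v = 0 := by
    intro v; funext k
    have : ∀ x : ZMod 3, x + x + x = 0 := by decide
    exact this (v k)
  have hd' : ∀ i, d' i = -a - d i := fun i => by linear_combination hpair i
  set e : Fin 5 → V4 := fun i => d i - a with hE
  -- basic nondegeneracy facts
  have h0 : ∀ i, e i ≠ 0 := by
    intro i h
    have hda : d i = a := by
      have := congrArg (· + a) h; simpa [hE, sub_add_cancel] using this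
    have : d i = d' i := by rw [hd' i, hda]; linear_combination h3v a
    exact Sum.inl_ne_inr (hfinj (a₁ := Sum.inl i) (a₂ := Sum.inr i) this)
  have hpw : ∀ i j, i ≠ j → e i ≠ e j ∧ e i ≠ -e j := by
    intro i j hij
    constructor
    · intro h
      have : d i = d j := by
        have := congrArg (· + a) h; simpa [hE, sub_add_cancel] using this
      exact hij (Sum.inl_injective (hfinj (a₁ := Sum.inl i) (a₂ := Sum.inl j) this))
    · intro h
      have : d i = d' j := by
        rw [hd' j]
        have : d i - a = -(d j - a) := h
        linear_combination this + h3v a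
      exact Sum.inl_ne_inr (hfinj (a₁ := Sum.inl i) (a₂ := Sum.inr j) this)
  have h2 : ∀ i j, i ≠ j → ∀ σ τ : ZMod 3, σ ≠ 0 → τ ≠ 0 → σ • e i + τ • e j ≠ 0 := by
    intro i j hij σ τ hσ hτ h
    rcases pair_rel hσ hτ h with h' | h'
    · exact (hpw i j hij).1 h'
    · exact (hpw i j hij).2 h'
  -- membership
  have hdm : ∀ (i : Fin 5) (σ : ZMod 3), σ ≠ 0 → a + σ • e i ∈ D := by
    intro i σ hσ
    obtain ⟨b, rfl⟩ := zmod3_ne_zero hσ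
    cases b
    · have : a + sg false • e i = d' i := by
        rw [hd' i]
        show a + (-1 : ZMod 3) • (d i - a) = -a - d i
        rw [neg_one_smul]
        linear_combination h3v a
      rw [this, hD]; exact Or.inr ⟨i, rfl⟩
    · have : a + sg true • e i = d i := by
        show a + (1 : ZMod 3) • (d i - a) = d i
        rw [one_smul]; ring
      rw [this, hD]; exact Or.inl ⟨i, rfl⟩
  have hDchar : ∀ x ∈ D, ∃ (i : Fin 5) (b : Bool), x = a + sg b • e i := by
    intro x hx
    rw [hD] at hx
    rcases hx with ⟨i, rfl⟩ | ⟨i, rfl⟩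
    · exact ⟨i, true, by show d i = a + (1 : ZMod 3) • (d i - a); rw [one_smul]; ring⟩
    · refine ⟨i, false, ?_⟩
      show d' i = a + (-1 : ZMod 3) • (d i - a)
      rw [neg_one_smul, hd' i]
      linear_combination -h3v a
  -- cap condition in linear form
  have h3cap : ∀ i j k, i ≠ j → i ≠ k → j ≠ k → ∀ σ τ υ : ZMod 3, σ ≠ 0 → τ ≠ 0 → υ ≠ 0 →
      σ • e i + τ • e j + υ • e k ≠ 0 := by
    intro i j k hij hik hjk σ τ υ hσ hτ hυ h
    have hne : ∀ i' j', i' ≠ j' → ∀ σ' τ' : ZMod 3, σ' ≠ 0 → τ' ≠ 0 →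
        a + σ' • e i' ≠ a + τ' • e j' := by
      intro i' j' hij' σ' τ' hσ' hτ' h'
      have : σ' • e i' + (-τ') • e j' = 0 := by rw [neg_smul]; linear_combination h'
      exact h2 i' j' hij' σ' (-τ') hσ' (neg_ne_zero.mpr hτ') this
    refine hcap _ (hdm i σ hσ) _ (hdm j τ hτ) _ (hdm k υ hυ)
      (hne i j hij σ τ hσ hτ) (hne i k hik σ υ hσ hυ) (hne j k hjk τ υ hτ hυ) ?_
    linear_combination h + h3v a
  constructor
  · -- demicap → at most one line
    intro hstar b hbD hba x hx y hy x' hx' y' hy' hxy hx'y' hbxy hbx'y'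
    obtain ⟨i, b1, rfl⟩ := hDchar x hx
    obtain ⟨j, b2, rfl⟩ := hDchar y hy
    obtain ⟨k, b3, rfl⟩ := hDchar x' hx'
    obtain ⟨l, b4, rfl⟩ := hDchar y' hy'
    have hsame : ∀ (i' : Fin 5) (b1' b2' : Bool),
        a + sg b1' • e i' ≠ a + sg b2' • e i' →
        b + (a + sg b1' • e i') + (a + sg b2' • e i') = 0 → b = a := by
      intro i' b1' b2' hne hsum
      have hσ12 : sg b1' ≠ sg b2' := fun h => hne (by rw [h])
      have hz : sg b1' + sg b2' = 0 :=
        zmod3_add_eq_zero _ _ (sg_ne_zero b1') (sg_ne_zero b2') hσ12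
      have hz' : sg b1' • e i' + sg b2' • e i' = 0 := by
        rw [← add_smul, hz, zero_smul]
      linear_combination hsum - hz' - h3v a
    have hij : i ≠ j := by
      rintro rfl; exact hba (hsame i b1 b2 hxy hbxy)
    have hkl : k ≠ l := by
      rintro rfl; exact hba (hsame k b3 b4 hx'y' hbx'y')
    set c : Fin 5 → ZMod 3 :=
      fun m => sg b1 * ind i m + sg b2 * ind j m - sg b3 * ind k m - sg b4 * ind l m with hc
    have hcrel : ∑ m, c m • e m = 0 := by
      have hexp : ∑ m, c m • e m =
          sg b1 • e i + sg b2 • e j - sg b3 • e k - sg b4 • e l := by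
        simp only [hc, sub_smul, add_smul, Finset.sum_sub_distrib, Finset.sum_add_distrib,
          sum_ind_smul]
      rw [hexp]
      linear_combination hbxy - hbx'y'
    have hsupp : (Finset.univ.filter (fun m => c m ≠ 0)) ⊆ {i, j, k, l} := by
      intro m hm
      by_contra hmem
      simp only [Finset.mem_insert, Finset.mem_singleton, not_or] at hmem
      obtain ⟨hmi, hmj, hmk, hml⟩ := hmem
      have : c m = 0 := by
        simp [hc, ind, hmi, hmj, hmk, hml]
      exact (Finset.mem_filter.mp hm).2 this
    have hcard4 : (Finset.univ.filter (fun m => c m ≠ 0)).card ≤ 4 := by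
      refine (Finset.card_le_card hsupp).trans ?_
      refine (Finset.card_insert_le _ _).trans ?_
      refine Nat.succ_le_succ ?_
      refine (Finset.card_insert_le _ _).trans ?_
      refine Nat.succ_le_succ ?_
      refine (Finset.card_insert_le _ _).trans ?_
      simp
    by_cases hc3 : (Finset.univ.filter (fun m => c m ≠ 0)).card ≤ 3
    · have hc0 := lemK e h0 h2 h3cap c hcrel hc3
      have hz : ∀ m, sg b1 * ind i m + sg b2 * ind j m - sg b3 * ind k m - sg b4 * ind l m = 0 :=
        fun m => congrFun hc0 m
      rcases D4 i j k l b1 b2 b3 b4 hij hkl hz with ⟨rfl, rfl, rfl, rfl⟩ | ⟨rfl, rfl, rfl, rfl⟩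
      · rfl
      · exact Set.pair_comm _ _
    · obtain ⟨W, hW3, hWmem⟩ := exists_W e c hcrel (by omega)
      exact absurd ⟨_, by omega, W, hW3, fun m hm => hWmem m hm⟩ hstar
  · -- at most one line → demicap
    intro hright
    rintro ⟨s, hs4, W, hW3, hWmem⟩
    have hnli : ¬ LinearIndependent (ZMod 3) (fun m : {m // m ∈ s} => e m) := by
      intro hLI
      have hsp : Module.finrank (ZMod 3)
          (Submodule.span (ZMod 3) (Set.range fun m : {m // m ∈ s} => e m)) = 4 := by
        rw [finrank_span_eq_card hLI, Fintype.card_coe, hs4]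
      have hle : Submodule.span (ZMod 3) (Set.range fun m : {m // m ∈ s} => e m) ≤ W :=
        Submodule.span_le.mpr (by rintro _ ⟨m, rfl⟩; exact hWmem m m.2)
      have := Submodule.finrank_mono hle
      rw [hsp, hW3] at this
      omega
    obtain ⟨g, hg0, m', hm'⟩ := Fintype.not_linearIndependent_iff.mp hnli
    set c : Fin 5 → ZMod 3 := fun m => if h : m ∈ s then g ⟨m, h⟩ else 0 with hc
    have hcrel : ∑ m, c m • e m = 0 := by
      have h1 : ∑ m, c m • e m = ∑ m ∈ s, c m • e m := by
        rw [Finset.sum_subset (Finset.subset_univ s)]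
        intro m _ hm
        rw [hc]; simp [hm]
      rw [h1, ← Finset.sum_attach s (fun m => c m • e m)]
      have h2' : ∀ m : {x // x ∈ s}, c m • e m = g m • e m := by
        intro m; rw [hc]; simp [m.2]
      rw [Finset.sum_congr rfl (fun m _ => h2' m)]
      exact hg0
    have hsupps : (Finset.univ.filter (fun m => c m ≠ 0)) ⊆ s := by
      intro m hm
      by_contra hms
      exact (Finset.mem_filter.mp hm).2 (by rw [hc]; simp [hms])
    have hcm' : c m' ≠ 0 := by rw [hc]; simpa [m'.2] using hm'
    have hcne : c ≠ 0 := fun h => hcm' (congrFun h m')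
    by_cases hc3 : (Finset.univ.filter (fun m => c m ≠ 0)).card ≤ 3
    · exact hcne (lemK e h0 h2 h3cap c hcrel hc3)
    · -- support has 4 elements: build two pairs to contradict hright
      set t := Finset.univ.filter (fun m => c m ≠ 0) with hts
      have htc : t.card = 4 := by
        have := Finset.card_le_card hsupps
        omega
      have hmemt : ∀ m ∈ t, c m ≠ 0 := fun m hm => (Finset.mem_filter.mp hm).2
      obtain ⟨m0, hm0⟩ : t.Nonempty := Finset.card_pos.mp (by omega)
      obtain ⟨m1, m2, m3, h12, h13, h23, her⟩ := Finset.card_eq_three.mp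
        (by rw [Finset.card_erase_of_mem hm0, htc] : (t.erase m0).card = 3)
      have hm01 : m0 ≠ m1 := fun h => (Finset.mem_erase.mp (her ▸ by simp : m1 ∈ t.erase m0)).1 h.symm
      have hm02 : m0 ≠ m2 := fun h => (Finset.mem_erase.mp (her ▸ by simp : m2 ∈ t.erase m0)).1 h.symm
      have hm03 : m0 ≠ m3 := fun h => (Finset.mem_erase.mp (her ▸ by simp : m3 ∈ t.erase m0)).1 h.symm
      have hm1t : m1 ∈ t := (Finset.mem_erase.mp (her ▸ by simp : m1 ∈ t.erase m0)).2
      have hm2t : m2 ∈ t := (Finset.mem_erase.mp (her ▸ by simp : m2 ∈ t.erase m0)).2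
      have hm3t : m3 ∈ t := (Finset.mem_erase.mp (her ▸ by simp : m3 ∈ t.erase m0)).2
      have hsum : ∑ m ∈ t, c m • e m = 0 := by
        rw [hts, Finset.sum_filter_of_ne (fun m _ hm => by
          intro hcc; exact hm (by rw [hcc, zero_smul]))]
        exact hcrel
      have hrel4 : c m0 • e m0 + c m1 • e m1 + c m2 • e m2 + c m3 • e m3 = 0 := by
        rw [← Finset.insert_erase hm0, her] at hsum
        rw [Finset.sum_insert (by rw [← her]; exact Finset.notMem_erase m0 t),
          Finset.sum_insert (by simp [h12, h13]),
          Finset.sum_insert (by simp [h23]), Finset.sum_singleton] at hsum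
        linear_combination hsum
      set x : V4 := a + c m0 • e m0 with hx
      set y : V4 := a + c m1 • e m1 with hy
      set x' : V4 := a + (-(c m2)) • e m2 with hx'
      set y' : V4 := a + (-(c m3)) • e m3 with hy'
      set b : V4 := a - (c m0 • e m0 + c m1 • e m1) with hb
      have hc0 := hmemt m0 hm0
      have hc1 := hmemt m1 hm1t
      have hc2 := hmemt m2 hm2t
      have hc3' := hmemt m3 hm3t
      have hbne : b ≠ a := by
        intro h
        have : c m0 • e m0 + c m1 • e m1 = 0 := by
          rw [hb] at h; linear_combination -h
        exact h2 m0 m1 hm01 _ _ hc0 hc1 this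
      have hbnD : b ∉ D := by
        intro hbD
        obtain ⟨p, bp, hbe⟩ := hDchar b hbD
        have : c m0 • e m0 + c m1 • e m1 + sg bp • e p = 0 := by
          rw [hb] at hbe; linear_combination -hbe
        exact L3 e h0 h2 h3cap m0 m1 p hm01 _ _ _ hc0 hc1 (sg_ne_zero bp) this
      have hxy : x ≠ y := by
        intro h
        have : c m0 • e m0 + (-(c m1)) • e m1 = 0 := by
          rw [hx, hy] at h; simp only [neg_smul] at h ⊢; linear_combination h
        exact h2 m0 m1 hm01 _ _ hc0 (neg_ne_zero.mpr hc1) this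
      have hx'y' : x' ≠ y' := by
        intro h
        have : (-(c m2)) • e m2 + (c m3) • e m3 = 0 := by
          rw [hx', hy'] at h; simp only [neg_smul] at h ⊢; linear_combination h
        exact h2 m2 m3 h23 _ _ (neg_ne_zero.mpr hc2) hc3' this
      have hbxy : b + x + y = 0 := by
        rw [hb, hx, hy]; linear_combination h3v a
      have hbx'y' : b + x' + y' = 0 := by
        rw [hb, hx', hy']
        rw [neg_smul, neg_smul]
        linear_combination h3v a - hrel4
      have := hright b hbnD hbne x (hdm m0 _ hc0) y (hdm m1 _ hc1)
        x' (hdm m2 _ (neg_ne_zero.mpr hc2)) y' (hdm m3 _ (neg_ne_zero.mpr hc3'))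
        hxy hx'y' hbxy hbx'y'
      have hxmem : x ∈ ({x', y'} : Set V4) := this ▸ Set.mem_insert x {y}
      rcases hxmem with h | h
      · have : c m0 • e m0 + c m2 • e m2 = 0 := by
          rw [hx, hx'] at h
          simp only [neg_smul] at h
          linear_combination h
        exact h2 m0 m2 hm02 _ _ hc0 hc2 this
      · rw [Set.mem_singleton_iff] at h
        have : c m0 • e m0 + c m3 • e m3 = 0 := by
          rw [hx, hy'] at h
          simp only [neg_smul] at h
          linear_combination h
        exact h2 m0 m3 hm03 _ _ hc0 hc3' this
end

section
/- Let D be a demicap in (ZMod 3)^4 with anchor point a. Then among the 71 points of (ZMod 3)^4 not in D, exactly one (the anchor a) completes 5 lines with pairs of points of D, exactly 40 complete exactly one line, and exactly 30 complete no lines. -/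
/-- A demicap with anchor `a`: a 10-point cap consisting of five `a`-lines, no four
of the five lines through `a` lying in a common affine hyperplane. -/
def IsDemicap (a : V4) (D : Finset V4) : Prop :=
  D.card = 10 ∧ IsCap (↑D : Set V4) ∧
  ∃ d d' : Fin 5 → V4,
    (∀ i, a + d i + d' i = 0) ∧
    D = Finset.univ.image d ∪ Finset.univ.image d' ∧
    ¬ ∃ s : Finset (Fin 5), s.card = 4 ∧
      ∃ W : Submodule (ZMod 3) V4, Module.finrank (ZMod 3) W = 3 ∧
        ∀ i ∈ s, d i - a ∈ W

open scoped Classical in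
/-- The number of lines that `p` completes with unordered pairs of points of `D`. -/
noncomputable def linesCompleted (D : Finset V4) (p : V4) : ℕ :=
  (D.sym2.filter fun z => ∃ x y : V4, z = s(x, y) ∧ x ≠ y ∧ p + x + y = 0).card


section DemicapAux

open Finset Module Submodule

lemma grow (U : Submodule (ZMod 3) V4) (h : finrank (ZMod 3) U < 4) :
    ∃ W, U ≤ W ∧ finrank (ZMod 3) W = finrank (ZMod 3) U + 1 := by
  obtain ⟨m, hm⟩ := U.exists_of_finrank_lt (by simpa using h)
  have hmU : m ∉ U := by simpa using hm 1 one_ne_zero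
  have hm0 : m ≠ 0 := fun h0 => hmU (h0 ▸ U.zero_mem)
  refine ⟨U ⊔ (ZMod 3) ∙ m, le_sup_left, ?_⟩
  have hinf : U ⊓ ((ZMod 3) ∙ m) = ⊥ := by
    rw [eq_bot_iff]
    rintro x ⟨hxU, hxm⟩
    obtain ⟨c, rfl⟩ := mem_span_singleton.mp hxm
    rcases eq_or_ne c 0 with rfl | hc
    · simp
    · exact absurd hxU (hm c hc)
  have := Submodule.finrank_sup_add_finrank_inf_eq U ((ZMod 3) ∙ m)
  rw [hinf, finrank_span_singleton hm0] at this
  simpa using this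

lemma ext3 : ∀ k (U : Submodule (ZMod 3) V4), finrank (ZMod 3) U + k = 3 →
    ∃ W, U ≤ W ∧ finrank (ZMod 3) W = 3 := by
  intro k
  induction k with
  | zero => exact fun U h => ⟨U, le_rfl, by omega⟩
  | succ n ih =>
    intro U h
    obtain ⟨W₁, hUW₁, hW₁⟩ := grow U (by omega)
    obtain ⟨W, hW₁W, hW⟩ := ih W₁ (by omega)
    exact ⟨W, le_trans hUW₁ hW₁W, hW⟩

lemma key (e : Fin 5 → V4)
    (hW : ¬ ∃ s : Finset (Fin 5), s.card = 4 ∧ ∃ W : Submodule (ZMod 3) V4,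
      Module.finrank (ZMod 3) W = 3 ∧ ∀ i ∈ s, e i ∈ W)
    (c : Fin 5 → ZMod 3) (j0 : Fin 5) (hj0 : c j0 = 0)
    (hsum : ∑ i, c i • e i = 0) : ∀ i, c i = 0 := by
  by_contra hc
  push_neg at hc
  obtain ⟨i0, hi0⟩ := hc
  set s : Finset (Fin 5) := Finset.univ.erase j0 with hs
  have hi0s : i0 ∈ s := Finset.mem_erase.mpr ⟨fun h => hi0 (h ▸ hj0), Finset.mem_univ _⟩
  set U : Submodule (ZMod 3) V4 :=
    Submodule.span (ZMod 3) (((s.erase i0).image e : Finset V4) : Set V4) with hU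
  have hUe : ∀ i ∈ s.erase i0, e i ∈ U := fun i hi =>
    Submodule.subset_span (by simp only [Finset.coe_image, Set.mem_image, Finset.mem_coe]; exact ⟨i, hi, rfl⟩)
  have h1 : ∑ i ∈ s, c i • e i = 0 := by
    rw [hs, Finset.sum_erase _ (by rw [hj0, zero_smul])]
    exact hsum
  have h2 : c i0 • e i0 = - ∑ i ∈ s.erase i0, c i • e i :=
    eq_neg_iff_add_eq_zero.mpr (by rw [Finset.add_sum_erase s (fun i => c i • e i) hi0s]; exact h1)
  have hei0 : e i0 ∈ U := by
    have h3 : e i0 = (c i0)⁻¹ • (c i0 • e i0) := by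
      rw [smul_smul, inv_mul_cancel₀ hi0, one_smul]
    rw [h3, h2]
    exact Submodule.smul_mem _ _ (Submodule.neg_mem _ (Submodule.sum_mem _
      fun i hi => Submodule.smul_mem _ _ (hUe i hi)))
  have hUr : Module.finrank (ZMod 3) U ≤ 3 := by
    refine le_trans (finrank_span_finset_le_card _) ?_
    refine le_trans Finset.card_image_le ?_
    have hs4 : s.card = 4 := by rw [hs]; simp
    have hle := Finset.card_erase_of_mem hi0s
    omega
  obtain ⟨W, hUW, hW3⟩ := ext3 (3 - Module.finrank (ZMod 3) U) U (by omega)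
  refine hW ⟨s, by rw [hs]; simp, W, hW3, fun i hi => ?_⟩
  rcases eq_or_ne i i0 with rfl | hne
  · exact hUW hei0
  · exact hUW (hUe i (Finset.mem_erase.mpr ⟨hne, hi⟩))

lemma fin5_exists4 (i j k l : Fin 5) : ∃ m : Fin 5, m ≠ i ∧ m ≠ j ∧ m ≠ k ∧ m ≠ l := by
  revert i j k l; decide

lemma key4 {e : Fin 5 → V4}
    (hW : ¬ ∃ s : Finset (Fin 5), s.card = 4 ∧ ∃ W : Submodule (ZMod 3) V4,
      Module.finrank (ZMod 3) W = 3 ∧ ∀ i ∈ s, e i ∈ W)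
    {i j k l : Fin 5} (hij : i ≠ j) (hik : i ≠ k) (hil : i ≠ l) (hjk : j ≠ k)
    (hjl : j ≠ l) (hkl : k ≠ l) {ci cj ck cl : ZMod 3}
    (hrel : ci • e i + cj • e j + ck • e k + cl • e l = 0) :
    ci = 0 ∧ cj = 0 ∧ ck = 0 ∧ cl = 0 := by
  have hex : ∃ m : Fin 5, m ≠ i ∧ m ≠ j ∧ m ≠ k ∧ m ≠ l := fin5_exists4 i j k l
  obtain ⟨j0, hj0i, hj0j, hj0k, hj0l⟩ := hex
  set c : Fin 5 → ZMod 3 := fun m =>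
    if m = i then ci else if m = j then cj else if m = k then ck else if m = l then cl else 0
    with hc
  have hcsum : ∑ m, c m • e m = 0 := by
    rw [← Finset.sum_subset (Finset.subset_univ ({i, j, k, l} : Finset (Fin 5)))
      (fun x _ hx => by
        simp only [Finset.mem_insert, Finset.mem_singleton, not_or] at hx
        simp [hc, hx.1, hx.2.1, hx.2.2.1, hx.2.2.2])]
    rw [Finset.sum_insert (by simp [hij, hik, hil]),
        Finset.sum_insert (by simp [hjk, hjl]),
        Finset.sum_insert (by simp [hkl]), Finset.sum_singleton]
    simp only [hc, if_pos rfl, if_neg (Ne.symm hij), if_neg (Ne.symm hik),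
      if_neg (Ne.symm hil), if_neg (Ne.symm hjk), if_neg (Ne.symm hjl), if_neg (Ne.symm hkl)]
    rw [← hrel]; ring_nf
    abel
  have hall := key e hW c j0 (by simp [hc, hj0i, hj0j, hj0k, hj0l]) hcsum
  refine ⟨?_, ?_, ?_, ?_⟩
  · have := hall i; simpa [hc] using this
  · have := hall j; simpa [hc, Ne.symm hij] using this
  · have := hall k; simpa [hc, Ne.symm hik, Ne.symm hjk] using this
  · have := hall l; simpa [hc, Ne.symm hil, Ne.symm hjl, Ne.symm hkl] using this

lemma key3 {e : Fin 5 → V4}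
    (hW : ¬ ∃ s : Finset (Fin 5), s.card = 4 ∧ ∃ W : Submodule (ZMod 3) V4,
      Module.finrank (ZMod 3) W = 3 ∧ ∀ i ∈ s, e i ∈ W)
    {i j k : Fin 5} (hij : i ≠ j) (hik : i ≠ k) (hjk : j ≠ k) {ci cj ck : ZMod 3}
    (hrel : ci • e i + cj • e j + ck • e k = 0) :
    ci = 0 ∧ cj = 0 ∧ ck = 0 := by
  have hex : ∃ m : Fin 5, m ≠ i ∧ m ≠ j ∧ m ≠ k := by
    have h := fin5_exists4 i j k k
    obtain ⟨m, h1, h2, h3, _⟩ := h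
    exact ⟨m, h1, h2, h3⟩
  obtain ⟨l, hli, hlj, hlk⟩ := hex
  have h4 := key4 hW hij hik (Ne.symm hli) hjk (Ne.symm hlj) (Ne.symm hlk)
    (ci := ci) (cj := cj) (ck := ck) (cl := 0) (by rw [zero_smul, add_zero]; exact hrel)
  exact ⟨h4.1, h4.2.1, h4.2.2.1⟩

lemma key2 {e : Fin 5 → V4}
    (hW : ¬ ∃ s : Finset (Fin 5), s.card = 4 ∧ ∃ W : Submodule (ZMod 3) V4,
      Module.finrank (ZMod 3) W = 3 ∧ ∀ i ∈ s, e i ∈ W)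
    {i j : Fin 5} (hij : i ≠ j) {ci cj : ZMod 3}
    (hrel : ci • e i + cj • e j = 0) : ci = 0 ∧ cj = 0 := by
  have hex : ∃ m : Fin 5, m ≠ i ∧ m ≠ j := by
    obtain ⟨m, h1, h2, _, _⟩ := fin5_exists4 i j j j
    exact ⟨m, h1, h2⟩
  obtain ⟨k, hki, hkj⟩ := hex
  have h3 := key3 hW hij (Ne.symm hki) (Ne.symm hkj)
    (ci := ci) (cj := cj) (ck := 0) (by rw [zero_smul, add_zero]; exact hrel)
  exact ⟨h3.1, h3.2.1⟩

lemma key1 {e : Fin 5 → V4}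
    (hW : ¬ ∃ s : Finset (Fin 5), s.card = 4 ∧ ∃ W : Submodule (ZMod 3) V4,
      Module.finrank (ZMod 3) W = 3 ∧ ∀ i ∈ s, e i ∈ W)
    (i : Fin 5) : e i ≠ 0 := by
  intro h0
  obtain ⟨j, hj, _, _, _⟩ := fin5_exists4 i i i i
  have h2 := key2 hW (Ne.symm hj) (ci := 1) (cj := 0)
    (by rw [h0, zero_smul, smul_zero, add_zero])
  exact one_ne_zero h2.1

abbrev IsSign (x : ZMod 3) : Prop := x = 1 ∨ x = -1

lemma isSign_ne_zero {x : ZMod 3} (h : IsSign x) : x ≠ 0 := by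
  rcases h with rfl | rfl <;> decide

lemma pair_eq {e : Fin 5 → V4}
    (hW : ¬ ∃ s : Finset (Fin 5), s.card = 4 ∧ ∃ W : Submodule (ZMod 3) V4,
      Module.finrank (ZMod 3) W = 3 ∧ ∀ i ∈ s, e i ∈ W)
    {i j k l : Fin 5} (hij : i ≠ j) (hkl : k ≠ l) {σ τ σ' τ' : ZMod 3}
    (hσ : IsSign σ) (hτ : IsSign τ) (hσ' : IsSign σ') (hτ' : IsSign τ')
    (hrel : σ • e i + τ • e j = σ' • e k + τ' • e l) :
    (i = k ∧ j = l ∧ σ = σ' ∧ τ = τ') ∨ (i = l ∧ j = k ∧ σ = τ' ∧ τ = σ') := by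
  by_cases hik : i = k
  · subst hik
    by_cases hjl : j = l
    · subst hjl
      have h2 := key2 hW hij (ci := σ - σ') (cj := τ - τ')
        (by linear_combination (norm := module) hrel)
      exact Or.inl ⟨rfl, rfl, sub_eq_zero.mp h2.1, sub_eq_zero.mp h2.2⟩
    · have h3 := key3 hW hij hkl hjl (ci := σ - σ') (cj := τ) (ck := -τ')
        (by linear_combination (norm := module) hrel)
      exact absurd h3.2.1 (isSign_ne_zero hτ)
  · by_cases hil : i = l
    · subst hil
      by_cases hjk : j = k
      · subst hjk
        have h2 := key2 hW hij (ci := σ - τ') (cj := τ - σ')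
          (by linear_combination (norm := module) hrel)
        exact Or.inr ⟨rfl, rfl, sub_eq_zero.mp h2.1, sub_eq_zero.mp h2.2⟩
      · have h3 := key3 hW hij hik hjk (ci := σ - τ') (cj := τ) (ck := -σ')
          (by linear_combination (norm := module) hrel)
        exact absurd h3.2.1 (isSign_ne_zero hτ)
    · by_cases hjk : j = k
      · subst hjk
        have h3 := key3 hW hij hil hkl (ci := σ) (cj := τ - σ') (ck := -τ')
          (by linear_combination (norm := module) hrel)
        exact absurd h3.1 (isSign_ne_zero hσ)
      · by_cases hjl : j = l
        · subst hjl
          have h3 := key3 hW hij hik (Ne.symm hkl) (ci := σ) (cj := τ - τ') (ck := -σ')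
            (by linear_combination (norm := module) hrel)
          exact absurd h3.1 (isSign_ne_zero hσ)
        · have h4 := key4 hW hij hik hil hjk hjl hkl
            (ci := σ) (cj := τ) (ck := -σ') (cl := -τ')
            (by linear_combination (norm := module) hrel)
          exact absurd h4.1 (isSign_ne_zero hσ)

end DemicapAux

open scoped Classical in
/-- Among the 71 points outside a demicap `D` with anchor `a`: exactly one (the anchor)
completes 5 lines, exactly 40 complete exactly one line, and 30 complete none. -/
theorem demicap_line_completion_counts (a : V4) (D : Finset V4) (h : IsDemicap a D) :
    linesCompleted D a = 5 ∧
    ((Finset.univ \ D).filter fun p => linesCompleted D p = 5).card = 1 ∧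
    ((Finset.univ \ D).filter fun p => linesCompleted D p = 1).card = 40 ∧
    ((Finset.univ \ D).filter fun p => linesCompleted D p = 0).card = 30 := by
  classical
  obtain ⟨hcard10, -, d, d', hdd', hD, hW0⟩ := h
  obtain ⟨E, hE⟩ : ∃ E : Fin 5 → V4, ∀ i, E i = d i - a := ⟨fun i => d i - a, fun _ => rfl⟩
  have hWE : ¬ ∃ s : Finset (Fin 5), s.card = 4 ∧ ∃ W : Submodule (ZMod 3) V4,
      Module.finrank (ZMod 3) W = 3 ∧ ∀ i ∈ s, E i ∈ W := by
    simpa only [hE] using hW0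
  have h3 : a + a + a = 0 := funext fun t => by
    have hz : ∀ x : ZMod 3, x + x + x = 0 := by decide
    exact hz (a t)
  have hdi : ∀ i, d i = a + (1 : ZMod 3) • E i := fun i => by rw [hE]; module
  have hd'i : ∀ i, d' i = a + (-1 : ZMod 3) • E i := fun i => by
    rw [hE]; linear_combination (norm := module) hdd' i - h3
  have hmemD : ∀ x, x ∈ D ↔ ∃ i σ, IsSign σ ∧ x = a + σ • E i := by
    intro x
    rw [hD]
    simp only [Finset.mem_union, Finset.mem_image, Finset.mem_univ, true_and]
    constructor
    · rintro (⟨i, rfl⟩ | ⟨i, rfl⟩)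
      · exact ⟨i, 1, Or.inl rfl, hdi i⟩
      · exact ⟨i, -1, Or.inr rfl, hd'i i⟩
    · rintro ⟨i, σ, hσ, rfl⟩
      rcases hσ with rfl | rfl
      · exact Or.inl ⟨i, hdi i⟩
      · exact Or.inr ⟨i, hd'i i⟩
  have hEne : ∀ i, E i ≠ 0 := key1 hWE
  have haD : a ∉ D := by
    intro hmem
    obtain ⟨i, σ, hσ, hEq⟩ := (hmemD a).mp hmem
    have hz : σ • E i = 0 := by linear_combination (norm := module) -hEq
    exact hEne i ((smul_eq_zero.mp hz).resolve_left (isSign_ne_zero hσ))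
  have hptne : ∀ (i j : Fin 5) (σ τ : ZMod 3), IsSign σ → IsSign τ → i ≠ j →
      a + σ • E i ≠ a + τ • E j := by
    intro i j σ τ hσ hτ hij heq
    have h2 := key2 hWE hij (ci := σ) (cj := -τ)
      (by linear_combination (norm := module) heq)
    exact isSign_ne_zero hσ h2.1
  have hdd'ne : ∀ i, d i ≠ d' i := by
    intro i heq
    rw [hdi i, hd'i i] at heq
    apply hEne i
    have h2 : (2 : ZMod 3) • E i = 0 := by linear_combination (norm := module) heq
    exact (smul_eq_zero.mp h2).resolve_left (by decide)
  -- the five lines through the anchor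
  have hsetA : (D.sym2.filter fun z => ∃ x y : V4, z = s(x, y) ∧ x ≠ y ∧ a + x + y = 0)
      = Finset.univ.image (fun i => s(d i, d' i)) := by
    ext z
    simp only [Finset.mem_filter, Finset.mem_image, Finset.mem_univ, true_and]
    constructor
    · rintro ⟨hzD, x, y, rfl, hxy, hsxy⟩
      obtain ⟨i, σ, hσ, rfl⟩ := (hmemD x).mp (Finset.mk_mem_sym2_iff.mp hzD).1
      obtain ⟨j, τ, hτ, rfl⟩ := (hmemD y).mp (Finset.mk_mem_sym2_iff.mp hzD).2
      have hrel : σ • E i + τ • E j = 0 := by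
        linear_combination (norm := module) hsxy - h3
      by_cases hij : i = j
      · subst hij
        have hστ : σ + τ = 0 := by
          by_contra hne
          exact hEne i ((smul_eq_zero.mp (show (σ + τ) • E i = 0 by
            linear_combination (norm := module) hrel)).resolve_left hne)
        rcases hσ with rfl | rfl
        · have hτ1 : τ = -1 := by linear_combination hστ
          subst hτ1
          exact ⟨i, by rw [hdi i, hd'i i]⟩
        · have hτ1 : τ = 1 := by linear_combination hστ
          subst hτ1
          exact ⟨i, by rw [hdi i, hd'i i, Sym2.eq_swap]⟩
      · exact absurd (key2 hWE hij hrel).1 (isSign_ne_zero hσ)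
    · rintro ⟨i, rfl⟩
      refine ⟨Finset.mk_mem_sym2_iff.mpr ⟨?_, ?_⟩, d i, d' i, rfl, hdd'ne i, hdd' i⟩
      · exact (hmemD _).mpr ⟨i, 1, Or.inl rfl, hdi i⟩
      · exact (hmemD _).mpr ⟨i, -1, Or.inr rfl, hd'i i⟩
  have lcA : linesCompleted D a = 5 := by
    unfold linesCompleted
    rw [hsetA, Finset.card_image_of_injOn ?_]
    · simp
    · intro i _ j _ hseq
      rcases Sym2.eq_iff.mp hseq with ⟨h1, _⟩ | ⟨h1, _⟩
      · by_contra hij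
        rw [hdi i, hdi j] at h1
        exact hptne i j 1 1 (Or.inl rfl) (Or.inl rfl) hij h1
      · exfalso
        by_cases hij : i = j
        · subst hij; exact hdd'ne i h1
        · rw [hdi i, hd'i j] at h1
          exact hptne i j 1 (-1) (Or.inl rfl) (Or.inr rfl) hij h1
  -- every non-anchor point completes at most one line
  have lcB : ∀ p, p ∉ D → p ≠ a → linesCompleted D p ≤ 1 := by
    intro p hpD hpa
    unfold linesCompleted
    refine Finset.card_le_one.mpr ?_
    intro z1 hz1 z2 hz2
    obtain ⟨hz1D, x1, y1, rfl, hxy1, h1⟩ := Finset.mem_filter.mp hz1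
    obtain ⟨hz2D, x2, y2, rfl, hxy2, h2⟩ := Finset.mem_filter.mp hz2
    obtain ⟨i1, σ1, hσ1, rfl⟩ := (hmemD x1).mp (Finset.mk_mem_sym2_iff.mp hz1D).1
    obtain ⟨j1, τ1, hτ1, rfl⟩ := (hmemD y1).mp (Finset.mk_mem_sym2_iff.mp hz1D).2
    obtain ⟨i2, σ2, hσ2, rfl⟩ := (hmemD x2).mp (Finset.mk_mem_sym2_iff.mp hz2D).1
    obtain ⟨j2, τ2, hτ2, rfl⟩ := (hmemD y2).mp (Finset.mk_mem_sym2_iff.mp hz2D).2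
    have hne1 : i1 ≠ j1 := by
      rintro rfl
      have hst : σ1 ≠ τ1 := fun hh => hxy1 (by rw [hh])
      have hστ : σ1 + τ1 = 0 := by
        rcases hσ1 with rfl | rfl <;> rcases hτ1 with rfl | rfl <;>
          first | exact absurd rfl hst | decide
      refine hpa ?_
      have hz : (σ1 + τ1) • E i1 = 0 := by rw [hστ, zero_smul]
      linear_combination (norm := module) h1 - h3 - hz
    have hne2 : i2 ≠ j2 := by
      rintro rfl
      have hst : σ2 ≠ τ2 := fun hh => hxy2 (by rw [hh])
      have hστ : σ2 + τ2 = 0 := by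
        rcases hσ2 with rfl | rfl <;> rcases hτ2 with rfl | rfl <;>
          first | exact absurd rfl hst | decide
      refine hpa ?_
      have hz : (σ2 + τ2) • E i2 = 0 := by rw [hστ, zero_smul]
      linear_combination (norm := module) h2 - h3 - hz
    have hrel : σ1 • E i1 + τ1 • E j1 = σ2 • E i2 + τ2 • E j2 := by
      linear_combination (norm := module) h1 - h2
    rcases pair_eq hWE hne1 hne2 hσ1 hτ1 hσ2 hτ2 hrel with
      ⟨hik, hjl, hss, htt⟩ | ⟨hik, hjl, hss, htt⟩
    · subst hik; subst hjl; subst hss; subst htt; rfl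
    · subst hik; subst hjl; subst hss; subst htt; exact Sym2.eq_swap
  -- points off a line through two demicap points
  have hchiD : ∀ (i j : Fin 5) (σ τ : ZMod 3), i ≠ j → IsSign σ → IsSign τ →
      a - σ • E i - τ • E j ∉ D := by
    intro i j σ τ hij hσ hτ hmem
    obtain ⟨k, υ, hυ, hEq⟩ := (hmemD _).mp hmem
    by_cases hki : k = i
    · subst hki
      have h2 := key2 hWE hij (ci := σ + υ) (cj := τ)
        (by linear_combination (norm := module) -hEq)
      exact isSign_ne_zero hτ h2.2
    · by_cases hkj : k = j
      · subst hkj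
        have h2 := key2 hWE hij (ci := σ) (cj := τ + υ)
          (by linear_combination (norm := module) -hEq)
        exact isSign_ne_zero hσ h2.1
      · have hk3 := key3 hWE hij (Ne.symm hki) (Ne.symm hkj) (ci := σ) (cj := τ) (ck := υ)
          (by linear_combination (norm := module) -hEq)
        exact isSign_ne_zero hσ hk3.1
  have hchia : ∀ (i j : Fin 5) (σ τ : ZMod 3), i ≠ j → IsSign σ → IsSign τ →
      a - σ • E i - τ • E j ≠ a := by
    intro i j σ τ hij hσ hτ hEq
    have h2 := key2 hWE hij (ci := σ) (cj := τ)
      (by linear_combination (norm := module) -hEq)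
    exact isSign_ne_zero hσ h2.1
  have hchi1 : ∀ (i j : Fin 5) (σ τ : ZMod 3), i ≠ j → IsSign σ → IsSign τ →
      linesCompleted D (a - σ • E i - τ • E j) = 1 := by
    intro i j σ τ hij hσ hτ
    have hle := lcB _ (hchiD i j σ τ hij hσ hτ) (hchia i j σ τ hij hσ hτ)
    have hge : 0 < linesCompleted D (a - σ • E i - τ • E j) := by
      unfold linesCompleted
      refine Finset.card_pos.mpr ⟨s(a + σ • E i, a + τ • E j), Finset.mem_filter.mpr
        ⟨Finset.mk_mem_sym2_iff.mpr ⟨(hmemD _).mpr ⟨i, σ, hσ, rfl⟩,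
          (hmemD _).mpr ⟨j, τ, hτ, rfl⟩⟩, _, _, rfl, hptne i j σ τ hσ hτ hij, ?_⟩⟩
      linear_combination (norm := module) h3
    omega
  -- the 40 points completing exactly one line
  have hF1 : ((Finset.univ \ D).filter fun p => linesCompleted D p = 1) =
      ((Finset.univ.filter fun q : Fin 5 × Fin 5 => q.1 < q.2) ×ˢ
        (({1, -1} : Finset (ZMod 3)) ×ˢ ({1, -1} : Finset (ZMod 3)))).image
        (fun q => a - q.2.1 • E q.1.1 - q.2.2 • E q.1.2) := by
    ext p
    simp only [Finset.mem_filter, Finset.mem_sdiff, Finset.mem_univ, true_and,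
      Finset.mem_image, Finset.mem_product, Finset.mem_insert, Finset.mem_singleton]
    constructor
    · rintro ⟨hpD, hp1⟩
      have hpa : p ≠ a := fun hh => by rw [hh, lcA] at hp1; norm_num at hp1
      have hpos : 0 < (D.sym2.filter fun z =>
          ∃ x y : V4, z = s(x, y) ∧ x ≠ y ∧ p + x + y = 0).card := by
        have hh := hp1
        unfold linesCompleted at hh
        omega
      obtain ⟨z, hz⟩ := Finset.card_pos.mp hpos
      obtain ⟨hzD, x, y, rfl, hxy, hpxy⟩ := Finset.mem_filter.mp hz
      obtain ⟨i, σ, hσ, rfl⟩ := (hmemD x).mp (Finset.mk_mem_sym2_iff.mp hzD).1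
      obtain ⟨j, τ, hτ, rfl⟩ := (hmemD y).mp (Finset.mk_mem_sym2_iff.mp hzD).2
      have hij : i ≠ j := by
        rintro rfl
        have hst : σ ≠ τ := fun hh => hxy (by rw [hh])
        have hστ : σ + τ = 0 := by
          rcases hσ with rfl | rfl <;> rcases hτ with rfl | rfl <;>
            first | exact absurd rfl hst | decide
        refine hpa ?_
        have hz0 : (σ + τ) • E i = 0 := by rw [hστ, zero_smul]
        linear_combination (norm := module) hpxy - h3 - hz0
      have hp : p = a - σ • E i - τ • E j := by
        linear_combination (norm := module) hpxy - h3
      rcases lt_trichotomy i j with hlt | heq | hgt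
      · exact ⟨((i, j), (σ, τ)), ⟨hlt, hσ, hτ⟩, hp.symm⟩
      · exact absurd heq hij
      · refine ⟨((j, i), (τ, σ)), ⟨hgt, hτ, hσ⟩, ?_⟩
        rw [hp]; module
    · rintro ⟨⟨⟨i, j⟩, σ, τ⟩, ⟨hlt, hσ, hτ⟩, rfl⟩
      exact ⟨hchiD i j σ τ (ne_of_lt hlt) hσ hτ, hchi1 i j σ τ (ne_of_lt hlt) hσ hτ⟩
  have hF1card : ((Finset.univ \ D).filter fun p => linesCompleted D p = 1).card = 40 := by
    rw [hF1, Finset.card_image_of_injOn ?_, Finset.card_product, Finset.card_product]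
    · norm_num [show (Finset.univ.filter fun q : Fin 5 × Fin 5 => q.1 < q.2).card = 10 by decide,
        show ({1, -1} : Finset (ZMod 3)).card = 2 by decide]
    · rintro ⟨⟨i, j⟩, σ, τ⟩ hq ⟨⟨i', j'⟩, σ', τ'⟩ hq' hEq
      simp only [Finset.coe_filter, Finset.mem_coe, Finset.mem_product, Finset.coe_product,
        Set.mem_prod, Set.mem_setOf_eq, Finset.mem_univ, true_and, Finset.coe_insert,
        Set.mem_insert_iff, Finset.coe_singleton, Set.mem_singleton_iff] at hq hq'
      obtain ⟨hlt, hσ, hτ⟩ := hq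
      obtain ⟨hlt', hσ', hτ'⟩ := hq'
      have hrel : σ • E i + τ • E j = σ' • E i' + τ' • E j' := by
        linear_combination (norm := module) -hEq
      rcases pair_eq hWE (ne_of_lt hlt) (ne_of_lt hlt') hσ hτ hσ' hτ' hrel with
        ⟨e1, e2, e3, e4⟩ | ⟨e1, e2, e3, e4⟩
      · simp only [Prod.mk.injEq]
        exact ⟨⟨e1, e2⟩, e3, e4⟩
      · exfalso
        subst e1; subst e2
        exact absurd (hlt.trans hlt') (lt_irrefl _)
  -- the anchor is the unique point completing five lines
  have hF5 : ((Finset.univ \ D).filter fun p => linesCompleted D p = 5) = {a} := by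
    ext p
    simp only [Finset.mem_filter, Finset.mem_sdiff, Finset.mem_univ, true_and,
      Finset.mem_singleton]
    constructor
    · rintro ⟨hpD, hp5⟩
      by_contra hpa
      have := lcB p hpD hpa
      omega
    · rintro rfl
      exact ⟨haD, lcA⟩
  have hF5card : ((Finset.univ \ D).filter fun p => linesCompleted D p = 5).card = 1 := by
    rw [hF5]; rfl
  -- final count
  have hcard71 : (Finset.univ \ D).card = 71 := by
    rw [Finset.card_sdiff_of_subset (Finset.subset_univ D), hcard10]
    have h81 : (Finset.univ : Finset V4).card = 81 := by simp [Fintype.card_fun]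
    omega
  have hsplit : ((Finset.univ \ D).filter fun p => ¬ linesCompleted D p = 0) =
      ((Finset.univ \ D).filter fun p => linesCompleted D p = 1) ∪ {a} := by
    ext p
    simp only [Finset.mem_filter, Finset.mem_union, Finset.mem_sdiff, Finset.mem_univ,
      true_and, Finset.mem_singleton]
    constructor
    · rintro ⟨hpD, hp0⟩
      by_cases hpa : p = a
      · exact Or.inr hpa
      · exact Or.inl ⟨hpD, by have := lcB p hpD hpa; omega⟩
    · rintro (⟨hpD, hp1⟩ | rfl)
      · exact ⟨hpD, by omega⟩
      · exact ⟨haD, by rw [lcA]; norm_num⟩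
  have hnotcard : ((Finset.univ \ D).filter fun p => ¬ linesCompleted D p = 0).card = 41 := by
    rw [hsplit, Finset.card_union_of_disjoint, hF1card]
    · rfl
    · rw [Finset.disjoint_singleton_right]
      intro hmem
      have := (Finset.mem_filter.mp hmem).2
      rw [lcA] at this
      norm_num at this
  have hkey := Finset.card_filter_add_card_filter_not
    (s := Finset.univ \ D) (p := fun p => linesCompleted D p = 0)
  have hF0card : ((Finset.univ \ D).filter fun p => linesCompleted D p = 0).card = 30 := by
    omega
  exact ⟨lcA, hF5card, hF1card, hF0card⟩
end

section
/- If a cap in (ZMod 3)^4 consists of five pairs of points, each pair summing with a fixed point a to 0, and eight of the ten points lie in a common affine hyperplane H, then a ∈ H and those eight points consist of four of the five pairs. -/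
private lemma char3V (x : V4) : x + x + x = 0 := by
  funext t
  have h : ∀ a : ZMod 3, a + a + a = 0 := by decide
  simpa using h (x t)

private lemma hsm2V (x : V4) : (2 : ZMod 3) • x = -x := by
  funext t
  have h : ∀ z : ZMod 3, 2 * z = -z := by decide
  simpa [Pi.smul_apply, smul_eq_mul] using h (x t)

private lemma coeffs3 : ∀ c0 c1 c2 b0 b1 b2 : ZMod 3, c0 ≠ 0 → c1 ≠ 0 → c2 ≠ 0 → b0 ≠ 0 → b1 ≠ 0 → b2 ≠ 0 →
    ∃ g4 g5 : ZMod 3, g4 ≠ 0 ∧ g5 ≠ 0 ∧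
      ((g4*c0+g5*b0 = 0 ∧ g4*c1+g5*b1 = 0) ∨ (g4*c0+g5*b0 = 0 ∧ g4*c2+g5*b2 = 0) ∨
       (g4*c1+g5*b1 = 0 ∧ g4*c2+g5*b2 = 0)) := by decide

private lemma no_sym_cap (W : Submodule (ZMod 3) V4) (hW : Module.finrank (ZMod 3) W = 3)
    (y : Fin 5 → V4) (hmem : ∀ i, y i ∈ W)
    (hcap3 : ∀ i j k : Fin 5, i ≠ j → i ≠ k → j ≠ k → ∀ c1 c2 c3 : ZMod 3,
      c1 • y i + c2 • y j + c3 • y k = 0 → c1 = 0 ∧ c2 = 0 ∧ c3 = 0) : False := by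
  have getrel : ∀ m : Fin 5, (0 : Fin 5) ≠ m → (1 : Fin 5) ≠ m → (2 : Fin 5) ≠ m →
      ∃ e0 e1 e2 e3 : ZMod 3, e0 ≠ 0 ∧ e1 ≠ 0 ∧ e2 ≠ 0 ∧ e3 ≠ 0 ∧
        e0 • y 0 + e1 • y 1 + e2 • y 2 + e3 • y m = 0 := by
    intro m hm0 hm1 hm2
    have hni : ¬ LinearIndependent (ZMod 3)
        (fun t : Fin 4 => (⟨y (![0, 1, 2, m] t), hmem _⟩ : W)) := by
      intro h
      have := h.fintype_card_le_finrank
      rw [hW] at this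
      simp at this
    obtain ⟨g, hg0, t0, hgt⟩ := Fintype.not_linearIndependent_iff.mp hni
    have hrel : g 0 • y 0 + g 1 • y 1 + g 2 • y 2 + g 3 • y m = 0 := by
      have h := congrArg (fun z : W => (z : V4)) hg0
      simpa [Fin.sum_univ_four] using h
    have h3 : g 3 ≠ 0 := by
      intro h3
      rw [h3, zero_smul, add_zero] at hrel
      obtain ⟨e0, e1, e2⟩ := hcap3 0 1 2 (by decide) (by decide) (by decide) _ _ _ hrel
      fin_cases t0 <;> simp_all
    have h0 : g 0 ≠ 0 := by
      intro h0
      rw [h0, zero_smul, zero_add] at hrel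
      exact h3 (hcap3 1 2 m (by decide) hm1 hm2 _ _ _ hrel).2.2
    have h1 : g 1 ≠ 0 := by
      intro h1
      rw [h1, zero_smul, add_zero] at hrel
      exact h3 (hcap3 0 2 m (by decide) hm0 hm2 _ _ _ hrel).2.2
    have h2 : g 2 ≠ 0 := by
      intro h2
      rw [h2, zero_smul, add_zero] at hrel
      exact h3 (hcap3 0 1 m (by decide) hm0 hm1 _ _ _ hrel).2.2
    exact ⟨g 0, g 1, g 2, g 3, h0, h1, h2, h3, hrel⟩
  obtain ⟨c0, c1, c2, c3, hc0, hc1, hc2, hc3, hrelc⟩ := getrel 3 (by decide) (by decide) (by decide)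
  obtain ⟨b0, b1, b2, b3, hb0, hb1, hb2, hb3, hrelb⟩ := getrel 4 (by decide) (by decide) (by decide)
  obtain ⟨g4, g5, hg4, hg5, hdisj⟩ := coeffs3 c0 c1 c2 b0 b1 b2 hc0 hc1 hc2 hb0 hb1 hb2
  have hkey : (g4*c3) • y 3 + (g5*b3) • y 4 +
      ((g4*c0+g5*b0) • y 0 + (g4*c1+g5*b1) • y 1 + (g4*c2+g5*b2) • y 2) =
      g4 • (c0 • y 0 + c1 • y 1 + c2 • y 2 + c3 • y 3) +
      g5 • (b0 • y 0 + b1 • y 1 + b2 • y 2 + b3 • y 4) := by module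
  rw [hrelc, hrelb, smul_zero, smul_zero, add_zero] at hkey
  have hne : g4 * c3 ≠ 0 := mul_ne_zero hg4 hc3
  rcases hdisj with ⟨hA, hB⟩ | ⟨hA, hB⟩ | ⟨hA, hB⟩
  · rw [hA, hB, zero_smul, zero_smul, zero_add, zero_add] at hkey
    exact hne (hcap3 3 4 2 (by decide) (by decide) (by decide) _ _ _ hkey).1
  · rw [hA, hB, zero_smul, zero_smul, zero_add, add_zero] at hkey
    exact hne (hcap3 3 4 1 (by decide) (by decide) (by decide) _ _ _ hkey).1
  · rw [hA, hB, zero_smul, zero_smul, add_zero, add_zero] at hkey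
    exact hne (hcap3 3 4 0 (by decide) (by decide) (by decide) _ _ _ hkey).1

/-- If a cap consists of five `a`-lines and eight of its ten points lie in a common
affine hyperplane `H`, then `a ∈ H` and those eight points are four of the pairs. -/
theorem eight_points_in_hyperplane (a : V4) (d d' : Fin 5 → V4)
    (hpair : ∀ i, a + d i + d' i = 0)
    (S : Set V4) (hS : S = Set.range d ∪ Set.range d')
    (hcap : IsCap S) (hcard : S.ncard = 10)
    (W : Submodule (ZMod 3) V4) (hW : Module.finrank (ZMod 3) W = 3)
    (v : V4) (H : Set V4) (hH : H = {x | x - v ∈ W})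
    (E : Set V4) (hES : E ⊆ S) (hEcard : E.ncard = 8) (hEH : E ⊆ H) :
    a ∈ H ∧ ∃ s : Finset (Fin 5), s.card = 4 ∧
      E = {x | ∃ i ∈ s, x = d i ∨ x = d' i} := by
  classical
  subst hS hH
  -- distinctness
  have hSAB : (Set.range d ∪ Set.range d') =
      ↑((Finset.univ.image d) ∪ (Finset.univ.image d')) := by
    simp [Finset.coe_union, Finset.coe_image, Set.image_univ]
  have hcard' : ((Finset.univ.image d) ∪ (Finset.univ.image d')).card = 10 := by
    rw [hSAB, Set.ncard_coe_finset] at hcard; exact hcard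
  have hA5 : (Finset.univ.image d).card ≤ 5 := le_trans Finset.card_image_le (by simp)
  have hB5 : (Finset.univ.image d').card ≤ 5 := le_trans Finset.card_image_le (by simp)
  have hsum := Finset.card_union_add_card_inter (Finset.univ.image d) (Finset.univ.image d')
  have hu : (Finset.univ : Finset (Fin 5)).card = 5 := by simp
  have hint : ((Finset.univ.image d) ∩ (Finset.univ.image d')).card = 0 := by omega
  have hdinj : Function.Injective d := by
    have h := Finset.card_image_iff.mp
      (by omega : (Finset.univ.image d).card = (Finset.univ : Finset (Fin 5)).card)
    exact fun x y hxy => h (by simp) (by simp) hxy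
  have hd'inj : Function.Injective d' := by
    have h := Finset.card_image_iff.mp
      (by omega : (Finset.univ.image d').card = (Finset.univ : Finset (Fin 5)).card)
    exact fun x y hxy => h (by simp) (by simp) hxy
  have hdisj : ∀ i j, d i ≠ d' j := by
    intro i j h
    have hm : d i ∈ (Finset.univ.image d) ∩ (Finset.univ.image d') := by
      simp only [Finset.mem_inter, Finset.mem_image]
      exact ⟨⟨i, by simp⟩, ⟨j, by simp, h.symm⟩⟩
    rw [Finset.card_eq_zero.mp hint] at hm
    simp at hm
  set S : Set V4 := Set.range d ∪ Set.range d' with hSdef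
  have hSmem : ∀ {x : V4} (i : Fin 5), (x = d i ∨ x = d' i) → x ∈ S := by
    rintro x i (rfl | rfl)
    · exact Or.inl ⟨i, rfl⟩
    · exact Or.inr ⟨i, rfl⟩
  have hne2 : ∀ {x z : V4} (i j : Fin 5), i ≠ j →
      (x = d i ∨ x = d' i) → (z = d j ∨ z = d' j) → x ≠ z := by
    rintro x z i j hij (rfl | rfl) (rfl | rfl) h
    · exact hij (hdinj h)
    · exact hdisj i j h
    · exact hdisj j i h.symm
    · exact hij (hd'inj h)
  have ha_not : ∀ i, a ≠ d i ∧ a ≠ d' i := by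
    intro i
    constructor
    · intro h
      apply hdisj i i
      have ht := hpair i
      linear_combination h - ht + char3V (d i)
    · intro h
      apply hdisj i i
      have ht := hpair i
      linear_combination ht - h - char3V (d' i)
  -- the eight points and the two missing points
  have hSfin : S.Finite := (Set.finite_range d).union (Set.finite_range d')
  have hM2 : (S \ E).ncard = 2 := by
    rw [Set.ncard_diff hES (hSfin.subset hES), hcard, hEcard]
  obtain ⟨m1, m2, hm12, hMeq⟩ := Set.ncard_eq_two.mp hM2
  have hidx : ∀ x ∈ S, ∃ i, x = d i ∨ x = d' i := by
    rintro x (⟨i, rfl⟩ | ⟨i, rfl⟩)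
    · exact ⟨i, Or.inl rfl⟩
    · exact ⟨i, Or.inr rfl⟩
  have hm1M : m1 ∈ S \ E := by rw [hMeq]; exact Or.inl rfl
  have hm2M : m2 ∈ S \ E := by rw [hMeq]; exact Or.inr rfl
  obtain ⟨i1, hi1⟩ := hidx m1 hm1M.1
  obtain ⟨i2, hi2⟩ := hidx m2 hm2M.1
  have hEM : E = S \ (S \ E) := by
    ext x
    constructor
    · intro hx
      exact ⟨hES hx, fun h => h.2 hx⟩
    · rintro ⟨hxS, hx⟩
      by_contra hxE
      exact hx ⟨hxS, hxE⟩
  -- a full pair exists, giving a ∈ H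
  have hfull : ∀ i, i ≠ i1 → i ≠ i2 → d i ∈ E ∧ d' i ∈ E := by
    intro i h1 h2
    constructor
    · by_contra h
      have hm : d i ∈ S \ E := ⟨hSmem i (Or.inl rfl), h⟩
      rw [hMeq] at hm
      rcases hm with hm | hm
      · exact hne2 i i1 h1 (Or.inl rfl) hi1 hm
      · exact hne2 i i2 h2 (Or.inl rfl) hi2 hm
    · by_contra h
      have hm : d' i ∈ S \ E := ⟨hSmem i (Or.inr rfl), h⟩
      rw [hMeq] at hm
      rcases hm with hm | hm
      · exact hne2 i i1 h1 (Or.inr rfl) hi1 hm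
      · exact hne2 i i2 h2 (Or.inr rfl) hi2 hm
  have hlineH : ∀ x1 x2 x3 : V4, x1 + x2 + x3 = 0 →
      x1 ∈ {x : V4 | x - v ∈ W} → x2 ∈ {x : V4 | x - v ∈ W} → x3 ∈ {x : V4 | x - v ∈ W} := by
    intro x1 x2 x3 hsum3 h1 h2
    have hx : x3 - v = -((x1 - v) + (x2 - v)) := by
      linear_combination hsum3 - char3V v
    show x3 - v ∈ W
    rw [hx]
    exact Submodule.neg_mem _ (Submodule.add_mem _ h1 h2)
  obtain ⟨i0, hi01, hi02⟩ : ∃ i : Fin 5, i ≠ i1 ∧ i ≠ i2 := by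
    have h : ∀ p q : Fin 5, ∃ i, i ≠ p ∧ i ≠ q := by decide
    exact h i1 i2
  have haH : a ∈ {x : V4 | x - v ∈ W} := by
    obtain ⟨h1, h2⟩ := hfull i0 hi01 hi02
    exact hlineH (d i0) (d' i0) a (by linear_combination hpair i0) (hEH h1) (hEH h2)
  refine ⟨haH, ?_⟩
  by_cases hcase : i1 = i2
  · -- the two missing points form a pair : conclusion holds with s = univ.erase i1
    subst hcase
    have hMdd' : S \ E = {d i1, d' i1} := by
      rcases hi1 with h1 | h1 <;> rcases hi2 with h2 | h2
      · exact absurd (h1.symm ▸ h2.symm ▸ rfl : m1 = m2) hm12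
      · rw [hMeq, ← h1, ← h2]
      · rw [hMeq, ← h1, ← h2]
        exact Set.pair_comm m1 m2
      · exact absurd (h1.symm ▸ h2.symm ▸ rfl : m1 = m2) hm12
    refine ⟨Finset.univ.erase i1, by simp, ?_⟩
    rw [hEM, hMdd']
    ext x
    simp only [Set.mem_diff, Set.mem_insert_iff, Set.mem_singleton_iff, Set.mem_setOf_eq,
      Finset.mem_erase, Finset.mem_univ, and_true]
    constructor
    · rintro ⟨hxS, hx⟩
      push_neg at hx
      obtain ⟨j, hj⟩ := hidx x hxS
      refine ⟨j, ?_, hj⟩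
      rintro rfl
      rcases hj with rfl | rfl
      · exact hx.1 rfl
      · exact hx.2 rfl
    · rintro ⟨j, hji, hj⟩
      refine ⟨hSmem j hj, ?_⟩
      rintro (h | h)
      · exact hne2 j i1 hji hj (Or.inl rfl) h
      · exact hne2 j i1 hji hj (Or.inr rfl) h
  · -- the two missing points are in different pairs : contradiction
    exfalso
    have hone : ∀ i, d i ∈ {x : V4 | x - v ∈ W} ∨ d' i ∈ {x : V4 | x - v ∈ W} := by
      intro i
      by_cases hdE : d i ∈ E
      · exact Or.inl (hEH hdE)
      by_cases hd'E : d' i ∈ E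
      · exact Or.inr (hEH hd'E)
      exfalso
      have hm : d i ∈ S \ E := ⟨hSmem i (Or.inl rfl), hdE⟩
      have hm' : d' i ∈ S \ E := ⟨hSmem i (Or.inr rfl), hd'E⟩
      rw [hMeq] at hm hm'
      simp only [Set.mem_insert_iff, Set.mem_singleton_iff] at hm hm'
      rcases hm with hm | hm <;> rcases hm' with hm' | hm'
      · exact hdisj i i (hm.trans hm'.symm)
      · -- d i = m1, d' i = m2
        apply hcase
        have e1 : i = i1 := by
          rcases hi1 with h | h
          · exact hdinj (hm.trans h)
          · exact absurd (hm.trans h) (hdisj i i1)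
        have e2 : i = i2 := by
          rcases hi2 with h | h
          · exact absurd (hm'.trans h).symm (hdisj i2 i)
          · exact hd'inj (hm'.trans h)
        rw [← e1, e2]
      · -- d i = m2, d' i = m1
        apply hcase
        have e2 : i = i2 := by
          rcases hi2 with h | h
          · exact hdinj (hm.trans h)
          · exact absurd (hm.trans h) (hdisj i i2)
        have e1 : i = i1 := by
          rcases hi1 with h | h
          · exact absurd (hm'.trans h).symm (hdisj i1 i)
          · exact hd'inj (hm'.trans h)
        rw [← e1, e2]
      · exact hdisj i i (hm.trans hm'.symm)
    have hallH : ∀ i, d i ∈ {x : V4 | x - v ∈ W} ∧ d' i ∈ {x : V4 | x - v ∈ W} := by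
      intro i
      rcases hone i with h | h
      · exact ⟨h, hlineH a (d i) (d' i) (hpair i) haH h⟩
      · refine ⟨hlineH a (d' i) (d i) (by linear_combination hpair i) haH h, h⟩
    -- set up the symmetric configuration
    set y : Fin 5 → V4 := fun i => d i - a with hy
    have hy0 : ∀ i, y i ≠ 0 := by
      intro i h
      exact (ha_not i).1 (by linear_combination -h)
    have hp : ∀ (c : ZMod 3) (i : Fin 5), c ≠ 0 →
        ∃ p : V4, (p = d i ∨ p = d' i) ∧ c • y i = p - a := by
      intro c i hc
      have hc' : c = 1 ∨ c = 2 := by revert hc; revert c; decide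
      rcases hc' with rfl | rfl
      · exact ⟨d i, Or.inl rfl, by rw [one_smul]⟩
      · refine ⟨d' i, Or.inr rfl, ?_⟩
        rw [hsm2V]
        linear_combination char3V a - hpair i
    have hcap2' : ∀ i j : Fin 5, i ≠ j → ∀ c1 c2 : ZMod 3, c1 ≠ 0 → c2 ≠ 0 →
        c1 • y i + c2 • y j ≠ 0 := by
      intro i j hij c1 c2 h1 h2 h
      obtain ⟨p, hpd, hpe⟩ := hp c1 i h1
      obtain ⟨q, hqd, hqe⟩ := hp c2 j h2
      rw [hpe, hqe] at h
      rcases hqd with rfl | rfl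
      · have : p = d' j := by linear_combination h - hpair j + char3V a
        exact hne2 i j hij hpd (Or.inr rfl) this
      · have : p = d j := by linear_combination h - hpair j + char3V a
        exact hne2 i j hij hpd (Or.inl rfl) this
    have hcap3' : ∀ i j k : Fin 5, i ≠ j → i ≠ k → j ≠ k → ∀ c1 c2 c3 : ZMod 3,
        c1 • y i + c2 • y j + c3 • y k = 0 → c1 = 0 ∧ c2 = 0 ∧ c3 = 0 := by
      intro i j k hij hik hjk c1 c2 c3 h
      by_cases h1 : c1 = 0 <;> by_cases h2 : c2 = 0 <;> by_cases h3 : c3 = 0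
      · exact ⟨h1, h2, h3⟩
      · exfalso
        rw [h1, h2, zero_smul, zero_smul, zero_add, zero_add] at h
        rcases smul_eq_zero.mp h with h | h
        · exact h3 h
        · exact hy0 k h
      · exfalso
        rw [h1, h3, zero_smul, zero_smul, zero_add, add_zero] at h
        rcases smul_eq_zero.mp h with h | h
        · exact h2 h
        · exact hy0 j h
      · exfalso
        rw [h1, zero_smul, zero_add] at h
        exact hcap2' j k hjk c2 c3 h2 h3 h
      · exfalso
        rw [h2, h3, zero_smul, zero_smul, add_zero, add_zero] at h
        rcases smul_eq_zero.mp h with h | h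
        · exact h1 h
        · exact hy0 i h
      · exfalso
        rw [h2, zero_smul, add_zero] at h
        exact hcap2' i k hik c1 c3 h1 h3 h
      · exfalso
        rw [h3, zero_smul, add_zero] at h
        exact hcap2' i j hij c1 c2 h1 h2 h
      · exfalso
        obtain ⟨p, hpd, hpe⟩ := hp c1 i h1
        obtain ⟨q, hqd, hqe⟩ := hp c2 j h2
        obtain ⟨r, hrd, hre⟩ := hp c3 k h3
        rw [hpe, hqe, hre] at h
        exact hcap p (hSmem i hpd) q (hSmem j hqd) r (hSmem k hrd)
          (hne2 i j hij hpd hqd) (hne2 i k hik hpd hrd) (hne2 j k hjk hqd hrd)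
          (by linear_combination h + char3V a)
    refine no_sym_cap W hW y ?_ hcap3'
    intro i
    have h1 : d i - v ∈ W := (hallH i).1
    have h2 : a - v ∈ W := haH
    have he : y i = (d i - v) - (a - v) := by simp only [hy]; ring
    rw [he]
    exact Submodule.sub_mem _ h1 h2
end
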